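/- For each odd positive integer d = 2r+1, there exists a polynomial p(x,y) of degree exactly d, with exactly r+2 nonzero monomial terms, all coefficients nonnegative, such that p(x,y) - 1 is divisible by x + y - 1. -/

import Mathlib

def cc : ℕ → ℕ → ℕ
  | 0, 0 => 2
  | 0, _+1 => 0
  | 1, 0 => 1
  | 1, _+1 => 0
  | n+2, 0 => cc (n+1) 0
  | n+2, k+1 => cc (n+1) (k+1) + cc n k

lemma cc_eq_zero : ∀ n k, n < 2*k → cc n k = 0 := by
  intro n k
  induction n, k using cc.induct with
  | case1 => omega
  | case2 => intro _; rfl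
  | case3 => omega
  | case4 => intro _; rfl
  | case5 n ih => omega
  | case6 n k ih1 ih2 =>
    intro h
    simp only [cc]
    rw [ih1 (by omega), ih2 (by omega)]

lemma cc_pos : ∀ n k, 2*k ≤ n → 0 < cc n k := by
  intro n k
  induction n, k using cc.induct with
  | case1 => intro _; norm_num [cc]
  | case2 => omega
  | case3 => intro _; norm_num [cc]
  | case4 => omega
  | case5 n ih => intro _; simpa only [cc] using ih (by omega)
  | case6 n k ih1 ih2 =>
    intro h
    simp only [cc]
    rcases le_or_gt (2*(k+1)) (n+1) with h1 | h1
    · have := ih1 h1; omega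
    · have := ih2 (by omega); omega

open Polynomial in
section
open Polynomial

noncomputable def s (n : ℕ) : Polynomial ℝ :=
  ∑ k ∈ Finset.range (n+1), C (cc n k : ℝ) * X^(n-2*k) * (1-X)^k

lemma s_rec (n : ℕ) : s (n+2) = X * s (n+1) + (1-X) * s n := by
  have h1 : X * s (n+1)
      = ∑ k ∈ Finset.range (n+2), C (cc (n+1) k : ℝ) * X^(n+2-2*k) * (1-X)^k := by
    rw [s, Finset.mul_sum]
    refine Finset.sum_congr rfl fun k _ => ?_
    rcases le_or_gt (2*k) (n+1) with h | h
    · rw [show n+2-2*k = (n+1-2*k)+1 by omega, pow_succ]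
      ring
    · rw [cc_eq_zero _ _ h]; simp
  have h2 : (1-X) * s n
      = ∑ k ∈ Finset.range (n+1), C (cc n k : ℝ) * X^(n-2*k) * (1-X)^(k+1) := by
    rw [s, Finset.mul_sum]
    refine Finset.sum_congr rfl fun k _ => ?_
    rw [pow_succ]; ring
  rw [h1, h2, s]
  rw [Finset.sum_range_succ' (fun k => C (cc (n+2) k : ℝ) * X^(n+2-2*k) * (1-X)^k) (n+2)]
  have e1 : ∀ k, n+2-2*(k+1) = n-2*k := fun k => by omega
  have e2 : cc (n+2) 0 = cc (n+1) 0 := rfl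
  have e3 : ∀ k, cc (n+2) (k+1) = cc (n+1) (k+1) + cc n k := fun k => rfl
  simp only [e1, e2, e3]
  push_cast
  simp only [C_add, add_mul]
  rw [Finset.sum_add_distrib]
  rw [Finset.sum_range_succ (fun k => C ((cc (n+1) (k+1) : ℕ) : ℝ) * X^(n-2*k) * (1-X)^(k+1)),
      Finset.sum_range_succ (fun k => C ((cc n k : ℕ) : ℝ) * X^(n-2*k) * (1-X)^(k+1))]
  rw [cc_eq_zero (n+1) (n+2) (by omega), cc_eq_zero n (n+1) (by omega)]
  rw [Finset.sum_range_succ' (fun k => C (cc (n+1) k : ℝ) * X^(n+2-2*k) * (1-X)^k) (n+1)]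
  simp only [e1]
  push_cast
  simp only [C_0, zero_mul, add_zero, Nat.sub_zero, mul_zero, pow_zero, mul_one]
  ring

lemma s_closed : ∀ n, s n = 1 + (X-1)^n := by
  have base0 : s 0 = 1 + (X-1)^0 := by
    simp [s, cc]; norm_num
  have base1 : s 1 = 1 + (X-1)^1 := by
    rw [s]
    rw [Finset.sum_range_succ, Finset.sum_range_succ, Finset.sum_range_zero]
    rw [show cc 1 1 = 0 from rfl, show cc 1 0 = 1 from rfl]
    push_cast
    simp
  
  intro n
  induction n using Nat.strong_induction_on with
  | _ n ih =>
    match n with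
    | 0 => exact base0
    | 1 => exact base1
    | (m+2) =>
      rw [s_rec, ih (m+1) (by omega), ih m (by omega)]
      ring

end

open MvPolynomial

noncomputable def Ek (r k : ℕ) : Fin 2 →₀ ℕ :=
  if k ≤ r then Finsupp.single 0 (2*r+1-2*k) + Finsupp.single 1 k
  else Finsupp.single 1 (2*r+1)

noncomputable def Ak (r k : ℕ) : ℝ := if k ≤ r then (cc (2*r+1) k : ℝ) else 1

noncomputable def pp (r : ℕ) : MvPolynomial (Fin 2) ℝ :=
  ∑ k ∈ Finset.range (r+2), monomial (Ek r k) (Ak r k)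

lemma Ek_apply (r k : ℕ) :
    (Ek r k) 0 = (if k ≤ r then 2*r+1-2*k else 0) ∧ (Ek r k) 1 = (if k ≤ r then k else 2*r+1) := by
  unfold Ek
  split <;> simp [Finsupp.single_apply]

lemma Ak_pos (r k : ℕ) (hk : k < r + 2) : 0 < Ak r k := by
  unfold Ak
  split
  · exact_mod_cast cc_pos (2*r+1) k (by omega)
  · norm_num

lemma Ek_inj (r : ℕ) : Set.InjOn (Ek r) (Finset.range (r+2)) := by
  intro j hj j' hj' h
  simp only [Finset.coe_range, Set.mem_Iio] at hj hj'
  have h1 := congrFun (congrArg (↑· : (Fin 2 →₀ ℕ) → Fin 2 → ℕ) h) 1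
  have e := (Ek_apply r j).2
  have e' := (Ek_apply r j').2
  rw [e, e'] at h1
  split_ifs at h1 <;> omega

lemma coeff_pp (r : ℕ) (m : Fin 2 →₀ ℕ) :
    (pp r).coeff m = ∑ k ∈ Finset.range (r+2), (if Ek r k = m then Ak r k else 0) := by
  unfold pp
  rw [MvPolynomial.coeff_sum]
  exact Finset.sum_congr rfl fun k _ => coeff_monomial m (Ek r k) (Ak r k)

lemma coeff_pp_nonneg (r : ℕ) (m : Fin 2 →₀ ℕ) : 0 ≤ (pp r).coeff m := by
  rw [coeff_pp]
  refine Finset.sum_nonneg fun k hk => ?_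
  split
  · exact (Ak_pos r k (Finset.mem_range.mp hk)).le
  · exact le_refl 0

lemma coeff_pp_Ek (r : ℕ) (k : ℕ) (hk : k ∈ Finset.range (r+2)) :
    (pp r).coeff (Ek r k) = Ak r k := by
  rw [coeff_pp]
  rw [Finset.sum_eq_single k]
  · simp
  · intro j hj hne
    have : Ek r j ≠ Ek r k := fun h => hne (Ek_inj r (by simpa using hj) (by simpa using hk) h)
    simp [this]
  · intro h; exact absurd hk h

lemma support_pp (r : ℕ) : (pp r).support = (Finset.range (r+2)).image (Ek r) := by
  ext m
  rw [MvPolynomial.mem_support_iff]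
  constructor
  · intro h
    rw [coeff_pp] at h
    obtain ⟨k, hk, hne⟩ := Finset.exists_ne_zero_of_sum_ne_zero h
    simp only [ne_eq, ite_eq_right_iff, not_forall] at hne
    exact Finset.mem_image.mpr ⟨k, hk, hne.1⟩
  · intro h
    obtain ⟨k, hk, rfl⟩ := Finset.mem_image.mp h
    rw [coeff_pp_Ek r k hk]
    exact (Ak_pos r k (Finset.mem_range.mp hk)).ne'

lemma card_pp (r : ℕ) : (pp r).support.card = r + 2 := by
  rw [support_pp, Finset.card_image_of_injOn (Ek_inj r), Finset.card_range]

lemma degsum (m : Fin 2 →₀ ℕ) : (m.sum fun _ e => e) = m 0 + m 1 := by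
  rw [Finsupp.sum_fintype _ _ (fun _ => rfl), Fin.sum_univ_two]

lemma totalDegree_pp (r : ℕ) : (pp r).totalDegree = 2 * r + 1 := by
  apply le_antisymm
  · rw [MvPolynomial.totalDegree, support_pp]
    apply Finset.sup_le
    intro m hm
    obtain ⟨k, hk, rfl⟩ := Finset.mem_image.mp hm
    rw [degsum, (Ek_apply r k).1, (Ek_apply r k).2]
    split <;> omega
  · have h0 : Ek r 0 ∈ (pp r).support := by
      rw [MvPolynomial.mem_support_iff, coeff_pp_Ek r 0 (by simp)]
      exact (Ak_pos r 0 (by omega)).ne'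
    calc 2 * r + 1 = (Ek r 0).sum fun _ e => e := by
          rw [degsum, (Ek_apply r 0).1, (Ek_apply r 0).2]; simp
      _ ≤ _ := by rw [MvPolynomial.totalDegree]; exact Finset.le_sup (f := fun m : Fin 2 →₀ ℕ => m.sum fun _ e => e) h0

noncomputable def psi : MvPolynomial (Fin 2) ℝ →ₐ[ℝ] Polynomial ℝ :=
  MvPolynomial.aeval ![Polynomial.X, 1 - Polynomial.X]

noncomputable def sig : Polynomial ℝ →ₐ[ℝ] MvPolynomial (Fin 2) ℝ :=
  Polynomial.aeval (MvPolynomial.X 0)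

lemma psi_X0 : psi (X 0) = Polynomial.X := by simp [psi]
lemma psi_X1 : psi (X 1) = 1 - Polynomial.X := by simp [psi]

lemma key (w : MvPolynomial (Fin 2) ℝ) :
    (X 0 + X 1 - 1 : MvPolynomial (Fin 2) ℝ) ∣ (w - sig (psi w)) := by
  induction w using MvPolynomial.induction_on with
  | C a => simp [psi, sig]
  | add p q hp hq =>
    have : p + q - sig (psi (p + q)) = (p - sig (psi p)) + (q - sig (psi q)) := by
      rw [map_add, map_add]; ring
    rw [this]; exact dvd_add hp hq
  | mul_X p i hp =>
    have hX : (X 0 + X 1 - 1 : MvPolynomial (Fin 2) ℝ) ∣ (X i - sig (psi (X i))) := by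
      fin_cases i <;> simp only [Fin.isValue, Fin.mk_zero, Fin.mk_one, show ((fun i => i) (0:Fin 2)) = 0 from rfl]
      · rw [psi_X0]
        simp [sig]
      · rw [psi_X1]
        have : sig (1 - Polynomial.X) = 1 - X 0 := by simp [sig]
        rw [this]
        have : (X 1 : MvPolynomial (Fin 2) ℝ) - (1 - X 0) = X 0 + X 1 - 1 := by ring
        rw [this]
    have : p * X i - sig (psi (p * X i))
        = (p - sig (psi p)) * X i + sig (psi p) * (X i - sig (psi (X i))) := by
      rw [map_mul, map_mul]; ring
    rw [this]
    exact dvd_add (hp.mul_right _) (hX.mul_left _)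

lemma psi_pp (r : ℕ) : psi (pp r) = 1 := by
  have hmon : ∀ k, psi (monomial (Ek r k) (Ak r k))
      = Polynomial.C (Ak r k) * Polynomial.X ^ ((Ek r k) 0) * (1 - Polynomial.X) ^ ((Ek r k) 1) := by
    intro k
    rw [psi, MvPolynomial.aeval_monomial]
    rw [Finsupp.prod_fintype _ _ (fun _ => pow_zero _), Fin.prod_univ_two]
    simp [mul_assoc]
  unfold pp
  rw [map_sum]
  simp only [hmon]
  rw [Finset.sum_range_succ]
  have last : Polynomial.C (Ak r (r+1)) * Polynomial.X ^ ((Ek r (r+1)) 0) * (1 - Polynomial.X) ^ ((Ek r (r+1)) 1)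
      = (1 - Polynomial.X) ^ (2*r+1) := by
    rw [(Ek_apply r (r+1)).1, (Ek_apply r (r+1)).2]
    unfold Ak
    simp
  rw [last]
  have main : ∑ k ∈ Finset.range (r+1),
      Polynomial.C (Ak r k) * Polynomial.X ^ ((Ek r k) 0) * (1 - Polynomial.X) ^ ((Ek r k) 1)
      = s (2*r+1) := by
    rw [s]
    symm
    rw [show 2*r+1+1 = r+1 + (r+1) by omega]
    rw [Finset.sum_range_add]
    have h2 : ∑ k ∈ Finset.range (r+1),
        Polynomial.C (cc (2*r+1) (r+1+k) : ℝ) * Polynomial.X^(2*r+1-2*(r+1+k)) * (1-Polynomial.X)^(r+1+k) = 0 := by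
      apply Finset.sum_eq_zero
      intro k hk
      rw [cc_eq_zero (2*r+1) (r+1+k) (by omega)]
      simp
    rw [h2, add_zero]
    refine Finset.sum_congr rfl fun k hk => ?_
    have hk' : k ≤ r := by simpa [Nat.lt_succ_iff] using hk
    rw [(Ek_apply r k).1, (Ek_apply r k).2]
    unfold Ak
    simp [hk']
  rw [main, s_closed]
  have : (Polynomial.X - 1 : Polynomial ℝ) ^ (2*r+1) = -((1 - Polynomial.X) ^ (2*r+1)) := by
    rw [show (Polynomial.X - 1 : Polynomial ℝ) = -(1 - Polynomial.X) by ring,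
        Odd.neg_pow ⟨r, by omega⟩]
  rw [this]
  ring

open MvPolynomial in
/-- For each odd `d = 2r+1` there is a polynomial of degree exactly `d`,
with exactly `r+2` nonzero monomial terms, all coefficients nonnegative,
such that `p - 1` is divisible by `x + y - 1`. -/
theorem exists_sharp_polynomial (r : ℕ) :
    ∃ p : MvPolynomial (Fin 2) ℝ,
      p.totalDegree = 2 * r + 1 ∧
      p.support.card = r + 2 ∧
      (∀ m, 0 ≤ p.coeff m) ∧
      (X 0 + X 1 - 1) ∣ (p - 1) := by
  refine ⟨pp r, totalDegree_pp r, card_pp r, coeff_pp_nonneg r, ?_⟩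
  have h := key (pp r)
  rwa [psi_pp, map_one] at h
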